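/- Let V and X be real normed spaces, E, F : V → X linear maps, 0 < r < R, ε ∈ (0,1), and let τ : [0,∞) → [0,π/2] be a continuous nondecreasing function with τ(t)=0 for t ∈ [0,r], τ(t)=π/2 for t ∈ [R,∞), differentiable at every t > 0 except possibly at t = r and t = R, and satisfying 0 ≤ τ'(t) ≤ ε/t for r < t < R. Define T(x) = cos(τ(‖x‖))·E(x) + sin(τ(‖x‖))·F(x), G_θ(x) = cos(θ)·E(x) + sin(θ)·F(x), and g(θ,u) = ‖G_θ(u)‖. Then for all x, y ∈ V with x ≠ y and ‖x‖ ≥ ‖y‖ > 0, setting σ = τ(‖x‖), w = (x−y)/‖x−y‖, θ = π/2 + (τ(‖x‖)+τ(‖y‖))/2, and v = y/‖y‖, one has g(σ,w) − ε·g(θ,v) ≤ ‖T(x) − T(y)‖/‖x−y‖ ≤ g(σ,w) + ε·g(θ,v). -/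

import Mathlib

open Set Real

/-- **Proposition (key derivative-type estimate for the logarithmic spiral gluing).**
With `T x = cos(τ‖x‖) • E x + sin(τ‖x‖) • F x` and `g θ u = ‖cos θ • E u + sin θ • F u‖`,
for `x ≠ y` with `‖x‖ ≥ ‖y‖ > 0` one has
`g σ w - ε g θ v ≤ ‖T x - T y‖ / ‖x - y‖ ≤ g σ w + ε g θ v`,
where `σ = τ‖x‖`, `w = (x-y)/‖x-y‖`, `θ = π/2 + (τ‖x‖+τ‖y‖)/2`, `v = y/‖y‖`. -/
theorem spiral_gluing_estimate
    (V X : Type*)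
    [NormedAddCommGroup V] [NormedSpace ℝ V]
    [NormedAddCommGroup X] [NormedSpace ℝ X]
    (E F : V →ₗ[ℝ] X)
    (r R ε : ℝ) (hr : 0 < r) (hrR : r < R) (hε : ε ∈ Set.Ioo (0 : ℝ) 1)
    (τ : ℝ → ℝ)
    (hτrange : ∀ t ∈ Set.Ici (0 : ℝ), τ t ∈ Set.Icc 0 (π / 2))
    (hτcont : ContinuousOn τ (Set.Ici 0))
    (hτmono : MonotoneOn τ (Set.Ici 0))
    (hτzero : ∀ t ∈ Set.Icc (0 : ℝ) r, τ t = 0)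
    (hτtop : ∀ t ∈ Set.Ici R, τ t = π / 2)
    (hτdiff : ∀ t : ℝ, 0 < t → t ≠ r → t ≠ R → DifferentiableAt ℝ τ t)
    (hτderiv : ∀ t ∈ Set.Ioo r R, 0 ≤ deriv τ t ∧ deriv τ t ≤ ε / t)
    (T : V → X)
    (hT : ∀ x : V, T x = Real.cos (τ ‖x‖) • E x + Real.sin (τ ‖x‖) • F x)
    (g : ℝ → V → ℝ)
    (hg : ∀ (θ : ℝ) (u : V), g θ u = ‖Real.cos θ • E u + Real.sin θ • F u‖)
    (x y : V) (hxy : x ≠ y) (hy : 0 < ‖y‖) (hyx : ‖y‖ ≤ ‖x‖) :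
    g (τ ‖x‖) (‖x - y‖⁻¹ • (x - y)) - ε * g (π / 2 + (τ ‖x‖ + τ ‖y‖) / 2) (‖y‖⁻¹ • y)
        ≤ ‖T x - T y‖ / ‖x - y‖ ∧
      ‖T x - T y‖ / ‖x - y‖
        ≤ g (τ ‖x‖) (‖x - y‖⁻¹ • (x - y)) +
            ε * g (π / 2 + (τ ‖x‖ + τ ‖y‖) / 2) (‖y‖⁻¹ • y) := by

  obtain ⟨hε0, hε1⟩ := hε
  have hxy0 : (0:ℝ) < ‖x - y‖ := by
    rw [norm_pos_iff]; exact sub_ne_zero.mpr hxy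
  have hy0 : (0:ℝ) ≤ ‖y‖ := hy.le
  have hx0 : (0:ℝ) ≤ ‖x‖ := le_trans hy0 hyx
  have hστ : τ ‖y‖ ≤ τ ‖x‖ := hτmono hy0 hx0 hyx
  -- Key scalar inequality via the mean value theorem
  have key : ∀ a b : ℝ, 0 < a → a ≤ b → τ b - τ a ≤ ε / a * (b - a) := by
    intro a b ha hab
    set a' := max a r with ha'def
    set b' := min b R with hb'def
    have hεa : (0:ℝ) ≤ ε / a := div_nonneg hε0.le ha.le
    have hτa : τ a = τ a' := by
      rcases le_total r a with h | h
      · rw [ha'def, max_eq_left h]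
      · rw [ha'def, max_eq_right h, hτzero a ⟨ha.le, h⟩, hτzero r ⟨hr.le, le_refl r⟩]
    have hτb : τ b = τ b' := by
      rcases le_total b R with h | h
      · rw [hb'def, min_eq_left h]
      · rw [hb'def, min_eq_right h, hτtop b h, hτtop R (le_refl R)]
    have ha'0 : 0 < a' := lt_of_lt_of_le ha (le_max_left a r)
    have hb'0 : 0 < b' := lt_min (lt_of_lt_of_le ha hab) (lt_trans hr hrR)
    rcases le_or_gt b' a' with h | h
    · have hmono : τ b' ≤ τ a' := hτmono hb'0.le ha'0.le h
      nlinarith [mul_nonneg hεa (sub_nonneg.mpr hab)]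
    · have hsub : Set.Ioo a' b' ⊆ Set.Ioo r R := fun t ht =>
        ⟨lt_of_le_of_lt (le_max_right a r) ht.1, lt_of_lt_of_le ht.2 (min_le_right b R)⟩
      have hcont : ContinuousOn τ (Set.Icc a' b') :=
        hτcont.mono (fun t ht => le_trans ha'0.le ht.1)
      have hdiff : DifferentiableOn ℝ τ (Set.Ioo a' b') := by
        intro t ht
        have htr := hsub ht
        exact (hτdiff t (lt_trans hr htr.1) (ne_of_gt htr.1) (ne_of_lt htr.2)).differentiableWithinAt
      obtain ⟨c, hc, hslope⟩ := exists_deriv_eq_slope τ h hcont hdiff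
      obtain ⟨hd0, hd1⟩ := hτderiv c (hsub hc)
      have hca : a ≤ c := le_trans (le_max_left a r) hc.1.le
      have hc0 : 0 < c := lt_of_lt_of_le ha hca
      have hεc : ε / c ≤ ε / a := by gcongr
      have heq : τ b' - τ a' = deriv τ c * (b' - a') := by
        rw [hslope, div_mul_cancel₀ _ (ne_of_gt (sub_pos.mpr h))]
      have h1 : a ≤ a' := le_max_left a r
      have h2 : b' ≤ b := min_le_left b R
      nlinarith [sub_pos.mpr h, mul_le_mul_of_nonneg_right hd1 (le_of_lt (sub_pos.mpr h)),
        mul_le_mul_of_nonneg_right hεc (le_of_lt (sub_pos.mpr h)),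
        mul_le_mul_of_nonneg_left (show b' - a' ≤ b - a by linarith) hεa]
  have key2 : (τ ‖x‖ - τ ‖y‖) * ‖y‖ ≤ ε * ‖x - y‖ := by
    have h1 := key ‖y‖ ‖x‖ hy hyx
    have h2 : ‖x‖ - ‖y‖ ≤ ‖x - y‖ := by
      have := norm_sub_norm_le x y; linarith
    have h3 : ε / ‖y‖ * (‖x‖ - ‖y‖) * ‖y‖ = ε * (‖x‖ - ‖y‖) := by
      field_simp
    nlinarith [mul_le_mul_of_nonneg_right h1 hy0]
  -- Notation
  set σ := τ ‖x‖
  set ty := τ ‖y‖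
  set θ := π / 2 + (σ + ty) / 2 with hθdef
  set d := (σ - ty) / 2 with hddef
  have hd0 : 0 ≤ d := by simp only [hddef]; linarith
  have hdle : d ≤ π / 4 := by
    have h1 := (hτrange ‖x‖ hx0).2
    have h2 := (hτrange ‖y‖ hy0).1
    simp only [hddef]; linarith
  -- trig identities
  have hcosθ : Real.cos θ = -Real.sin ((σ + ty) / 2) := by
    rw [hθdef, Real.cos_add, Real.cos_pi_div_two, Real.sin_pi_div_two]; ring
  have hsinθ : Real.sin θ = Real.cos ((σ + ty) / 2) := by
    rw [hθdef, Real.sin_add, Real.cos_pi_div_two, Real.sin_pi_div_two]; ring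
  have hc : Real.cos σ - Real.cos ty = 2 * Real.sin d * Real.cos θ := by
    rw [Real.cos_sub_cos, hcosθ, hddef]; ring
  have hs : Real.sin σ - Real.sin ty = 2 * Real.sin d * Real.sin θ := by
    rw [Real.sin_sub_sin, hsinθ, hddef]
  -- decomposition
  set A := Real.cos σ • E (x - y) + Real.sin σ • F (x - y) with hAdef
  set B := (2 * Real.sin d) • (Real.cos θ • E y + Real.sin θ • F y) with hBdef
  have hdecomp : T x - T y = A + B := by
    rw [hT x, hT y, hAdef, hBdef, map_sub, map_sub]
    have hc' : Real.cos ty = Real.cos σ - 2 * Real.sin d * Real.cos θ := by linarith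
    have hs' : Real.sin ty = Real.sin σ - 2 * Real.sin d * Real.sin θ := by linarith
    rw [hc', hs']
    module
  -- norm of A
  have hnA : ‖A‖ = ‖x - y‖ * g σ (‖x - y‖⁻¹ • (x - y)) := by
    rw [hg]
    have : Real.cos σ • E (‖x - y‖⁻¹ • (x - y)) + Real.sin σ • F (‖x - y‖⁻¹ • (x - y))
        = ‖x - y‖⁻¹ • A := by
      rw [map_smul, map_smul, hAdef, smul_add, smul_comm (Real.cos σ), smul_comm (Real.sin σ)]
    rw [this, norm_smul, Real.norm_eq_abs, abs_of_nonneg (inv_nonneg.mpr hxy0.le)]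
    field_simp
  -- norm of B
  have hsind0 : 0 ≤ Real.sin d := Real.sin_nonneg_of_nonneg_of_le_pi hd0
    (by nlinarith [Real.pi_pos])
  have hnB : ‖B‖ = 2 * Real.sin d * ‖y‖ * g θ (‖y‖⁻¹ • y) := by
    rw [hg]
    have h1 : Real.cos θ • E (‖y‖⁻¹ • y) + Real.sin θ • F (‖y‖⁻¹ • y)
        = ‖y‖⁻¹ • (Real.cos θ • E y + Real.sin θ • F y) := by
      rw [map_smul, map_smul, smul_add, smul_comm (Real.cos θ), smul_comm (Real.sin θ)]
    rw [h1, hBdef, norm_smul, norm_smul, Real.norm_eq_abs, Real.norm_eq_abs,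
      abs_of_nonneg (inv_nonneg.mpr hy0), abs_of_nonneg (by linarith : (0:ℝ) ≤ 2 * Real.sin d)]
    field_simp
  -- bound on ‖B‖
  have hg0 : 0 ≤ g θ (‖y‖⁻¹ • y) := by rw [hg]; exact norm_nonneg _
  have hsinle : Real.sin d ≤ d := Real.sin_le hd0
  have hBbound : ‖B‖ ≤ ε * ‖x - y‖ * g θ (‖y‖⁻¹ • y) := by
    rw [hnB]
    have h0 : 2 * Real.sin d ≤ σ - ty := by
      rw [hddef] at hsinle; linarith
    have h1 : 2 * Real.sin d * ‖y‖ ≤ (σ - ty) * ‖y‖ :=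
      mul_le_mul_of_nonneg_right h0 hy0
    have h2 : 2 * Real.sin d * ‖y‖ ≤ ε * ‖x - y‖ := le_trans h1 key2
    exact mul_le_mul_of_nonneg_right h2 hg0
  -- conclude
  have htri1 : ‖T x - T y‖ ≤ ‖A‖ + ‖B‖ := by rw [hdecomp]; exact norm_add_le A B
  have htri2 : ‖A‖ - ‖B‖ ≤ ‖T x - T y‖ := by
    rw [hdecomp]
    have := norm_sub_norm_le A (-B)
    simpa [sub_neg_eq_add] using this
  constructor
  · rw [le_div_iff₀ hxy0]
    calc (g σ (‖x - y‖⁻¹ • (x - y)) - ε * g θ (‖y‖⁻¹ • y)) * ‖x - y‖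
        = ‖x - y‖ * g σ (‖x - y‖⁻¹ • (x - y)) - ε * ‖x - y‖ * g θ (‖y‖⁻¹ • y) := by ring
      _ ≤ ‖A‖ - ‖B‖ := by rw [hnA]; linarith
      _ ≤ ‖T x - T y‖ := htri2
  · rw [div_le_iff₀ hxy0]
    calc ‖T x - T y‖ ≤ ‖A‖ + ‖B‖ := htri1
      _ ≤ ‖x - y‖ * g σ (‖x - y‖⁻¹ • (x - y)) + ε * ‖x - y‖ * g θ (‖y‖⁻¹ • y) := by
          rw [hnA]; linarith
      _ = (g σ (‖x - y‖⁻¹ • (x - y)) + ε * g θ (‖y‖⁻¹ • y)) * ‖x - y‖ := by ring
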